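/- arXiv:quant-ph/0311081 — 3 statements merged into one kernel-verified Lean document; each statement's English description precedes it below -/
import Mathlib

section
/- For unit vectors n, r ∈ ℝ³ and ε ∈ (0,1), P(n,ε) P(r,1) P(n,ε) = λ(ε,n,r) • P(r',1), where λ(ε,n,r) = (1+ε²+2ε(n·r))/4 and r' = ((1-ε²)r + 2ε(1+ε(n·r))n) / (1+ε²+2ε(n·r)). Here P(m,1) = (1/2)(I + m·σ) is the projection onto the spin state in direction m. -/
open Matrix

noncomputable def pauli1 : Matrix (Fin 2) (Fin 2) ℂ := !![0, 1; 1, 0]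
noncomputable def pauli2 : Matrix (Fin 2) (Fin 2) ℂ := !![0, -Complex.I; Complex.I, 0]
noncomputable def pauli3 : Matrix (Fin 2) (Fin 2) ℂ := !![1, 0; 0, -1]

noncomputable def dotPauli (m : Fin 3 → ℝ) : Matrix (Fin 2) (Fin 2) ℂ :=
  (m 0 : ℂ) • pauli1 + (m 1 : ℂ) • pauli2 + (m 2 : ℂ) • pauli3

/-- The fuzzy projection `P(m, δ) = (1/2)(I + δ m·σ)`. -/
noncomputable def fuzzyProj (m : Fin 3 → ℝ) (δ : ℝ) : Matrix (Fin 2) (Fin 2) ℂ :=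
  (1 / 2 : ℂ) • (1 + (δ : ℂ) • dotPauli m)

/-- Euclidean inner product on ℝ³. -/
def dot3 (a b : Fin 3 → ℝ) : ℝ := a 0 * b 0 + a 1 * b 1 + a 2 * b 2

lemma dotPauli_anti (a b : Fin 3 → ℝ) :
    dotPauli a * dotPauli b + dotPauli b * dotPauli a
      = ((2 * dot3 a b : ℝ) : ℂ) • (1 : Matrix (Fin 2) (Fin 2) ℂ) := by
  ext i j
  fin_cases i <;> fin_cases j <;>
    simp [dotPauli, pauli1, pauli2, pauli3, dot3, Matrix.mul_apply, Fin.sum_univ_two,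
      Matrix.one_apply] <;> ring_nf <;> simp [Complex.I_sq] <;> ring

lemma dotPauli_comb (a b : Fin 3 → ℝ) (c e : ℝ) :
    dotPauli (fun i => c * a i + e * b i) = (c : ℂ) • dotPauli a + (e : ℂ) • dotPauli b := by
  simp only [dotPauli]
  push_cast
  module

lemma expand_aux (A B : Matrix (Fin 2) (Fin 2) ℂ) (c : ℂ) :
    (1 + c • A) * (1 + B) * (1 + c • A)
      = 1 + c • A + c • A + B + c • (A * B + B * A) + (c ^ 2) • (A * A)
        + (c ^ 2) • (A * B * A) := by
  noncomm_ring
  match_scalars <;> simp [nsmul_eq_mul] <;> ring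

theorem jump_formula (n r : Fin 3 → ℝ)
    (hn : dot3 n n = 1) (hr : dot3 r r = 1)
    (ε : ℝ) (hε : 0 < ε) (hε1 : ε < 1) :
    fuzzyProj n ε * fuzzyProj r 1 * fuzzyProj n ε
      = (((1 + ε ^ 2 + 2 * ε * dot3 n r) / 4 : ℝ) : ℂ) •
          fuzzyProj (fun i =>
            ((1 - ε ^ 2) * r i + 2 * ε * (1 + ε * dot3 n r) * n i) /
              (1 + ε ^ 2 + 2 * ε * dot3 n r)) 1 := by
  set N := dotPauli n with hN
  set R := dotPauli r with hR
  set d : ℝ := dot3 n r with hd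
  have hDpos : 0 < 1 + ε ^ 2 + 2 * ε * d := by
    have h1 : 0 ≤ 2 + 2 * d := by
      simp only [hd, dot3] at *
      nlinarith [sq_nonneg (n 0 + r 0), sq_nonneg (n 1 + r 1), sq_nonneg (n 2 + r 2)]
    nlinarith [sq_nonneg (1 - ε)]
  have hDne : (1 + (ε : ℂ) ^ 2 + 2 * ε * d) ≠ 0 := by
    have := Complex.ofReal_ne_zero.mpr (ne_of_gt hDpos)
    push_cast at this
    convert this using 2 <;> push_cast <;> ring
  have hNN : N * N = (1 : Matrix (Fin 2) (Fin 2) ℂ) := by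
    have h := dotPauli_anti n n
    rw [← hN, hn] at h
    have h3 : (2 : ℂ) • (N * N) = (2 : ℂ) • (1 : Matrix (Fin 2) (Fin 2) ℂ) := by
      rw [two_smul]
      simpa using h
    exact smul_right_injective _ (by norm_num) h3
  have hanti : N * R + R * N = ((2 * d : ℝ) : ℂ) • (1 : Matrix (Fin 2) (Fin 2) ℂ) :=
    dotPauli_anti n r
  have hNRN : N * R * N = ((2 * d : ℝ) : ℂ) • N - R := by
    have h1 : N * R = ((2 * d : ℝ) : ℂ) • (1 : Matrix (Fin 2) (Fin 2) ℂ) - R * N :=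
      eq_sub_of_add_eq hanti
    calc N * R * N = (((2 * d : ℝ) : ℂ) • (1 : Matrix (Fin 2) (Fin 2) ℂ) - R * N) * N := by
          rw [h1]
      _ = ((2 * d : ℝ) : ℂ) • N - R * (N * N) := by noncomm_ring
      _ = ((2 * d : ℝ) : ℂ) • N - R := by rw [hNN, mul_one]
  have hr' : (fun i => ((1 - ε ^ 2) * r i + 2 * ε * (1 + ε * d) * n i) / (1 + ε ^ 2 + 2 * ε * d))
      = fun i => ((1 - ε ^ 2) / (1 + ε ^ 2 + 2 * ε * d)) * r i + (2 * ε * (1 + ε * d) / (1 + ε ^ 2 + 2 * ε * d)) * n i := by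
    funext i; ring
  have hcomb : dotPauli (fun i => ((1 - ε ^ 2) * r i + 2 * ε * (1 + ε * d) * n i) / (1 + ε ^ 2 + 2 * ε * d))
      = (((1 - ε ^ 2) / (1 + ε ^ 2 + 2 * ε * d) : ℝ) : ℂ) • R + ((2 * ε * (1 + ε * d) / (1 + ε ^ 2 + 2 * ε * d) : ℝ) : ℂ) • N := by
    rw [hr', dotPauli_comb]
  have key : (1 + (ε : ℂ) • N) * (1 + R) * (1 + (ε : ℂ) • N)
      = ((1 + ε ^ 2 + 2 * ε * d : ℝ) : ℂ) • (1 : Matrix (Fin 2) (Fin 2) ℂ)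
        + ((2 * ε * (1 + ε * d) : ℝ) : ℂ) • N + ((1 - ε ^ 2 : ℝ) : ℂ) • R := by
    rw [expand_aux, hanti, hNN, hNRN]
    match_scalars <;> push_cast <;> ring
  have lhs_eq : fuzzyProj n ε * fuzzyProj r 1 * fuzzyProj n ε
      = (1 / 8 : ℂ) • ((1 + (ε : ℂ) • N) * (1 + R) * (1 + (ε : ℂ) • N)) := by
    simp only [fuzzyProj, ← hN, ← hR, Complex.ofReal_one, one_smul, smul_mul_assoc,
      mul_smul_comm, smul_smul]
    norm_num
  rw [lhs_eq, key]
  simp only [fuzzyProj, hcomb, Complex.ofReal_one, one_smul]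
  match_scalars <;> push_cast <;> field_simp [hDne, show (1 + (ε : ℂ) ^ 2 + ε * 2 * d) ≠ 0 by simpa [mul_comm, mul_assoc] using hDne] <;> ring
end

section
/- If A and B are self-adjoint bounded operators on a complex Hilbert space and ψ is a unit vector, then the standard deviations Δψ A = (⟨A²⟩ψ - ⟨A⟩ψ²)^{1/2} and Δψ B satisfy the Robertson inequality Δψ A · Δψ B ≥ (1/2)|⟨[A,B]⟩ψ|, where ⟨X⟩ψ = ⟨ψ, X ψ⟩. -/
open scoped InnerProductSpace

/-- Robertson's uncertainty inequality for bounded self-adjoint operators. -/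
theorem robertson_inequality {H : Type*} [NormedAddCommGroup H]
    [InnerProductSpace ℂ H] [CompleteSpace H]
    (A B : H →L[ℂ] H) (hA : IsSelfAdjoint A) (hB : IsSelfAdjoint B)
    (ψ : H) (hψ : ‖ψ‖ = 1) :
    Real.sqrt ((⟪ψ, A (A ψ)⟫_ℂ).re - (⟪ψ, A ψ⟫_ℂ).re ^ 2) *
        Real.sqrt ((⟪ψ, B (B ψ)⟫_ℂ).re - (⟪ψ, B ψ⟫_ℂ).re ^ 2)
      ≥ (1 / 2) * ‖⟪ψ, A (B ψ) - B (A ψ)⟫_ℂ‖ := by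
  have hAs := ContinuousLinearMap.isSelfAdjoint_iff_isSymmetric.mp hA
  have hBs := ContinuousLinearMap.isSelfAdjoint_iff_isSymmetric.mp hB
  set α : ℝ := (⟪ψ, A ψ⟫_ℂ).re with hα
  set β : ℝ := (⟪ψ, B ψ⟫_ℂ).re with hβ
  set a : ℂ := (α : ℂ) with ha
  set b : ℂ := (β : ℂ) with hb
  have hconja : (starRingEnd ℂ) a = a := by rw [ha]; exact Complex.conj_ofReal _
  have hconjb : (starRingEnd ℂ) b = b := by rw [hb]; exact Complex.conj_ofReal _
  have hAreal : ⟪ψ, A ψ⟫_ℂ = a := by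
    have h : (starRingEnd ℂ) ⟪ψ, A ψ⟫_ℂ = ⟪ψ, A ψ⟫_ℂ := by
      rw [inner_conj_symm]; exact hAs.apply_clm ψ ψ
    rw [ha, hα]; exact (Complex.conj_eq_iff_re.mp h).symm
  have hBreal : ⟪ψ, B ψ⟫_ℂ = b := by
    have h : (starRingEnd ℂ) ⟪ψ, B ψ⟫_ℂ = ⟪ψ, B ψ⟫_ℂ := by
      rw [inner_conj_symm]; exact hBs.apply_clm ψ ψ
    rw [hb, hβ]; exact (Complex.conj_eq_iff_re.mp h).symm
  have hAψψ : ⟪A ψ, ψ⟫_ℂ = a := by rw [hAs.apply_clm, hAreal]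
  have hBψψ : ⟪B ψ, ψ⟫_ℂ = b := by rw [hBs.apply_clm, hBreal]
  set u : H := A ψ - a • ψ with hu
  set v : H := B ψ - b • ψ with hv
  have hnψ : ⟪ψ, ψ⟫_ℂ = 1 := by
    rw [inner_self_eq_norm_sq_to_K (𝕜 := ℂ) ψ, hψ]; norm_num
  have keyA : Real.sqrt ((⟪ψ, A (A ψ)⟫_ℂ).re - α ^ 2) = ‖u‖ := by
    have h1 : ⟪u, u⟫_ℂ = ⟪ψ, A (A ψ)⟫_ℂ - a ^ 2 := by
      simp only [hu, inner_sub_left, inner_sub_right, inner_smul_left, inner_smul_right,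
        hnψ, hAreal, hAψψ, hconja, hAs.apply_clm ψ (A ψ)]
      ring
    have h2 : (‖u‖ : ℝ) ^ 2 = (⟪ψ, A (A ψ)⟫_ℂ).re - α ^ 2 := by
      have h3 := congrArg Complex.re h1
      have h4 : (‖u‖ : ℝ) ^ 2 = (⟪u, u⟫_ℂ).re := (inner_self_eq_norm_sq (𝕜 := ℂ) u).symm
      rw [h4, h3, Complex.sub_re, ha, ← Complex.ofReal_pow, Complex.ofReal_re]
    rw [← h2, Real.sqrt_sq (norm_nonneg u)]
  have keyB : Real.sqrt ((⟪ψ, B (B ψ)⟫_ℂ).re - β ^ 2) = ‖v‖ := by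
    have h1 : ⟪v, v⟫_ℂ = ⟪ψ, B (B ψ)⟫_ℂ - b ^ 2 := by
      simp only [hv, inner_sub_left, inner_sub_right, inner_smul_left, inner_smul_right,
        hnψ, hBreal, hBψψ, hconjb, hBs.apply_clm ψ (B ψ)]
      ring
    have h2 : (‖v‖ : ℝ) ^ 2 = (⟪ψ, B (B ψ)⟫_ℂ).re - β ^ 2 := by
      have h3 := congrArg Complex.re h1
      have h4 : (‖v‖ : ℝ) ^ 2 = (⟪v, v⟫_ℂ).re := (inner_self_eq_norm_sq (𝕜 := ℂ) v).symm
      rw [h4, h3, Complex.sub_re, hb, ← Complex.ofReal_pow, Complex.ofReal_re]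
    rw [← h2, Real.sqrt_sq (norm_nonneg v)]
  have hcomm : ⟪ψ, A (B ψ) - B (A ψ)⟫_ℂ = ⟪u, v⟫_ℂ - ⟪v, u⟫_ℂ := by
    have e1 : ⟪u, v⟫_ℂ = ⟪A ψ, B ψ⟫_ℂ - a * b := by
      simp only [hu, hv, inner_sub_left, inner_sub_right, inner_smul_left, inner_smul_right,
        hnψ, hBreal, hAψψ, hconja]
      ring
    have e2 : ⟪v, u⟫_ℂ = ⟪B ψ, A ψ⟫_ℂ - a * b := by
      simp only [hu, hv, inner_sub_left, inner_sub_right, inner_smul_left, inner_smul_right,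
        hnψ, hAreal, hBψψ, hconjb]
      ring
    rw [inner_sub_right, e1, e2, ← hAs.apply_clm ψ (B ψ), ← hBs.apply_clm ψ (A ψ)]
    ring
  have him : ‖⟪u, v⟫_ℂ - ⟪v, u⟫_ℂ‖ ≤ 2 * (‖u‖ * ‖v‖) := by
    rw [(inner_conj_symm u v).symm]
    calc ‖(starRingEnd ℂ) ⟪v, u⟫_ℂ - ⟪v, u⟫_ℂ‖
        ≤ ‖(starRingEnd ℂ) ⟪v, u⟫_ℂ‖ + ‖⟪v, u⟫_ℂ‖ :=
          norm_sub_le _ _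
      _ = 2 * ‖⟪v, u⟫_ℂ‖ := by rw [RCLike.norm_conj]; ring
      _ ≤ 2 * (‖v‖ * ‖u‖) := by
          have h := norm_inner_le_norm (𝕜 := ℂ) v u
          linarith
      _ = 2 * (‖u‖ * ‖v‖) := by ring
  rw [keyA, keyB, hcomm, ge_iff_le]
  linarith
end

section
/- With ψ as in the PDP non-unitary evolution (ψ̇ = (-iH - Λ/2)ψ, H self-adjoint, Λ ≥ 0, ‖ψ(t₀)‖ = 1), the jump probability p(t) = 1 - exp(-∫_{t₀}^t ⟨ψ(s),Λψ(s)⟩/‖ψ(s)‖² ds) equals 1 - ‖ψ(t)‖², provided ‖ψ(s)‖ > 0 for s ∈ [t₀,t]. -/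
open scoped InnerProductSpace

/-- The jump probability `p(t) = 1 - exp(-∫ λ(s) ds)` of the PDP, with intensity
`λ(s) = ⟨ψ(s),Λψ(s)⟩/‖ψ(s)‖²`, equals `1 - ‖ψ(t)‖²`, given `‖ψ(t₀)‖ = 1`. -/
theorem jump_probability_eq {d : ℕ}
    (H Λ : EuclideanSpace ℂ (Fin d) →L[ℂ] EuclideanSpace ℂ (Fin d))
    (hH : ∀ x y, ⟪H x, y⟫_ℂ = ⟪x, H y⟫_ℂ)
    (hΛpos : ∀ x, 0 ≤ (⟪x, Λ x⟫_ℂ).re)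
    (hΛreal : ∀ x, (⟪x, Λ x⟫_ℂ).im = 0)
    (ψ : ℝ → EuclideanSpace ℂ (Fin d))
    (hψ : ∀ t, HasDerivAt ψ ((-Complex.I) • H (ψ t) - (1 / 2 : ℂ) • Λ (ψ t)) t)
    (t₀ t : ℝ) (ht : t₀ ≤ t)
    (hinit : ‖ψ t₀‖ = 1)
    (hpos : ∀ s ∈ Set.Icc t₀ t, 0 < ‖ψ s‖) :
    1 - Real.exp (-(∫ s in t₀..t, (⟪ψ s, Λ (ψ s)⟫_ℂ).re / ‖ψ s‖ ^ 2))
      = 1 - ‖ψ t‖ ^ 2 := by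
  -- derivative of the squared norm
  have hsq : ∀ s, HasDerivAt (fun u => ‖ψ u‖ ^ 2)
      (-(⟪ψ s, Λ (ψ s)⟫_ℂ).re) s := by
    intro s
    have h1 := ((hψ s).inner ℝ (hψ s))
    have hderiv : (⟪ψ s, (-Complex.I) • H (ψ s) - (1/2 : ℂ) • Λ (ψ s)⟫_ℝ
        + ⟪(-Complex.I) • H (ψ s) - (1/2 : ℂ) • Λ (ψ s), ψ s⟫_ℝ)
        = -(⟪ψ s, Λ (ψ s)⟫_ℂ).re := by
      have hsym : ∀ x y : EuclideanSpace ℂ (Fin d), ⟪x, y⟫_ℝ = (⟪x, y⟫_ℂ).re :=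
        fun x y => by simp [PiLp.inner_apply, Complex.inner, Complex.re_sum]
      rw [hsym, hsym]
      have hHre : (⟪ψ s, H (ψ s)⟫_ℂ).im = 0 := by
        have h2 : starRingEnd ℂ ⟪ψ s, H (ψ s)⟫_ℂ = ⟪ψ s, H (ψ s)⟫_ℂ := by
          rw [inner_conj_symm, hH]
        exact Complex.conj_eq_iff_im.mp h2
      rw [inner_sub_right, inner_sub_left, inner_smul_right, inner_smul_left,
        inner_smul_right, inner_smul_left]
      have hc : ⟪Λ (ψ s), ψ s⟫_ℂ = starRingEnd ℂ ⟪ψ s, Λ (ψ s)⟫_ℂ :=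
        (inner_conj_symm _ _).symm
      have hc2 : ⟪H (ψ s), ψ s⟫_ℂ = starRingEnd ℂ ⟪ψ s, H (ψ s)⟫_ℂ :=
        (inner_conj_symm _ _).symm
      rw [hc, hc2]
      set z := ⟪ψ s, H (ψ s)⟫_ℂ with hz
      set w := ⟪ψ s, Λ (ψ s)⟫_ℂ with hw
      have hwim : w.im = 0 := hΛreal (ψ s)
      simp only [Complex.sub_re, Complex.mul_re, Complex.neg_re, Complex.neg_im,
        Complex.I_re, Complex.I_im, Complex.conj_re, Complex.conj_im, map_neg,
        Complex.smul_re, map_div₀, map_one, map_ofNat, Complex.div_re, Complex.div_im,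
        Complex.one_re, Complex.one_im, Complex.re_ofNat, Complex.im_ofNat,
        Complex.normSq_ofNat, hHre, hwim]
      ring
    have := h1
    rw [hderiv] at this
    have hfun : (fun u => (⟪ψ u, ψ u⟫_ℝ : ℝ)) = fun u => ‖ψ u‖ ^ 2 := by
      funext u; rw [real_inner_self_eq_norm_sq]
    rwa [hfun] at this
  -- continuity of ψ
  have hdiff : Differentiable ℝ ψ := fun s => (hψ s).differentiableAt
  have hcont : Continuous ψ := hdiff.continuous
  -- derivative of log of squared norm
  have hlog : ∀ s ∈ Set.uIcc t₀ t, HasDerivAt (fun u => Real.log (‖ψ u‖ ^ 2))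
      (-((⟪ψ s, Λ (ψ s)⟫_ℂ).re / ‖ψ s‖ ^ 2)) s := by
    intro s hs
    rw [Set.uIcc_of_le ht] at hs
    have hne : ‖ψ s‖ ^ 2 ≠ 0 := pow_ne_zero 2 (ne_of_gt (hpos s hs))
    simpa [neg_div] using (hsq s).log hne
  -- integrability
  have hcontlam : ContinuousOn (fun s => -((⟪ψ s, Λ (ψ s)⟫_ℂ).re / ‖ψ s‖ ^ 2))
      (Set.uIcc t₀ t) := by
    rw [Set.uIcc_of_le ht]
    apply ContinuousOn.neg
    apply ContinuousOn.div
    · exact (Complex.continuous_re.comp (hcont.inner (Λ.continuous.comp hcont))).continuousOn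
    · exact ((hcont.norm).pow 2).continuousOn
    · exact fun s hs => pow_ne_zero 2 (ne_of_gt (hpos s hs))
  have hint : IntervalIntegrable (fun s => -((⟪ψ s, Λ (ψ s)⟫_ℂ).re / ‖ψ s‖ ^ 2))
      MeasureTheory.volume t₀ t := hcontlam.intervalIntegrable
  have hFTC := intervalIntegral.integral_eq_sub_of_hasDerivAt hlog hint
  rw [intervalIntegral.integral_neg] at hFTC
  have h0 : Real.log (‖ψ t₀‖ ^ 2) = 0 := by rw [hinit]; simp
  have hexp : Real.exp (-(∫ s in t₀..t, (⟪ψ s, Λ (ψ s)⟫_ℂ).re / ‖ψ s‖ ^ 2))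
      = ‖ψ t‖ ^ 2 := by
    have : -(∫ s in t₀..t, (⟪ψ s, Λ (ψ s)⟫_ℂ).re / ‖ψ s‖ ^ 2)
        = Real.log (‖ψ t‖ ^ 2) := by linarith [hFTC]
    rw [this, Real.exp_log (pow_pos (hpos t ⟨ht, le_refl t⟩) 2)]
  rw [hexp]
end
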